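/- Let $S$ be an algebra over a field with anti-automorphism $*$, $e \in S$ an idempotent with $e^* = e$, and suppose the left ideal $Se$ has a basis $\{x_\alpha e\}$ and the right ideal $eS$ has the basis $\{e x_\alpha^*\} = \{(x_\alpha e)^*\}$. If there is a bilinear form on $Se$ with dual bases available (i.e., for each $\alpha$ there is $x'_\alpha$ with $e (x'_\beta)^* x_\alpha e = \delta_{\alpha\beta}\, e$), then the multiplication map $Se \otimes eS \to SeS$ is an isomorphism of $S$-bimodules; in particular the elements $\{x_\alpha e x_\beta^*\}$ are linearly independent. -/

import Mathlib

open scoped TensorProduct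

/-- The multiplication map `Se ⊗[k] eS → S`, `a ⊗ b ↦ ab`, where
`Se = range (· * e)` and `eS = range (e * ·)`. -/
noncomputable def multMap (k : Type*) [Field k] (S : Type*) [Ring S] [Algebra k S]
    (e : S) :
    (LinearMap.range (LinearMap.mulRight k e)) ⊗[k]
      (LinearMap.range (LinearMap.mulLeft k e)) →ₗ[k] S :=
  TensorProduct.lift ((LinearMap.mul k S).compl₁₂
    (LinearMap.range (LinearMap.mulRight k e)).subtype
    (LinearMap.range (LinearMap.mulLeft k e)).subtype)

theorem multMap_tmul (k : Type*) [Field k] (S : Type*) [Ring S] [Algebra k S]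
    (e : S) (a : LinearMap.range (LinearMap.mulRight k e))
    (b : LinearMap.range (LinearMap.mulLeft k e)) :
    multMap k S e (a ⊗ₜ b) = (a : S) * (b : S) := rfl

theorem mult_map_isomorphism
    (k : Type*) [Field k] (S : Type*) [Ring S] [Algebra k S]
    (st : S →ₗ[k] S) (hanti : ∀ x y : S, st (x * y) = st y * st x)
    (hinv : ∀ x : S, st (st x) = x)
    (e : S) (he : e * e = e) (hse : st e = e)
    (A : Type*) [Fintype A] [DecidableEq A]
    (x : A → S)
    (hli : LinearIndependent k (fun α : A => x α * e))
    (hspan : ∀ s : S, s * e ∈ Submodule.span k (Set.range fun α : A => x α * e))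
    (x' : A → S)
    (hdual : ∀ α β : A, e * st (x' β) * (x α * e) = if α = β then e else 0) :
    Function.Injective (multMap k S e) ∧
    LinearMap.range (multMap k S e) =
      Submodule.span k {z : S | ∃ a b : S, z = a * e * b} ∧
    LinearIndependent k (fun p : A × A => x p.1 * e * st (x p.2)) := by
  -- the range statement, valid in general
  have hrange : LinearMap.range (multMap k S e) =
      Submodule.span k {z : S | ∃ a b : S, z = a * e * b} := by
    apply le_antisymm
    · rintro z ⟨t, rfl⟩
      induction t using TensorProduct.induction_on with
      | zero => simp
      | tmul a b =>
        obtain ⟨av, s, rfl⟩ := a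
        obtain ⟨bv, u, rfl⟩ := b
        rw [multMap_tmul]
        apply Submodule.subset_span
        exact ⟨s, e * u, by simp [mul_assoc]⟩
      | add u v hu hv =>
        rw [map_add]
        exact Submodule.add_mem _ hu hv
    · rw [Submodule.span_le]
      rintro z ⟨a, b, rfl⟩
      refine ⟨(⟨a * e, ⟨a, rfl⟩⟩ : LinearMap.range (LinearMap.mulRight k e)) ⊗ₜ
        (⟨e * b, ⟨b, rfl⟩⟩ : LinearMap.range (LinearMap.mulLeft k e)), ?_⟩
      rw [multMap_tmul]
      show a * e * (e * b) = a * e * b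
      rw [mul_assoc, ← mul_assoc e e, he, ← mul_assoc]
  -- degenerate case
  by_cases he0 : e = 0
  · subst he0
    have hA : IsEmpty A := ⟨fun a => hli.ne_zero a (by simp)⟩
    have hsub : Subsingleton (LinearMap.range (LinearMap.mulRight k (0 : S))) := by
      constructor
      rintro ⟨_, s, rfl⟩ ⟨_, u, rfl⟩
      simp
    have hts : Subsingleton ((LinearMap.range (LinearMap.mulRight k (0 : S))) ⊗[k]
        (LinearMap.range (LinearMap.mulLeft k (0 : S)))) := by
      constructor
      have hz : ∀ t : (LinearMap.range (LinearMap.mulRight k (0 : S))) ⊗[k]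
          (LinearMap.range (LinearMap.mulLeft k (0 : S))), t = 0 := by
        intro t
        induction t using TensorProduct.induction_on with
        | zero => rfl
        | tmul a b => rw [Subsingleton.elim a 0, TensorProduct.zero_tmul]
        | add u v hu hv => rw [hu, hv, add_zero]
      intro a b
      rw [hz a, hz b]
    refine ⟨fun a b _ => Subsingleton.elim a b, hrange, ?_⟩
    have : IsEmpty (A × A) := by infer_instance
    exact linearIndependent_empty_type
  -- main case
  · -- the second dual relation
    have hdual2 : ∀ α β : A, e * st (x α) * (x' β * e) = if α = β then e else 0 := by
      intro α β
      have h := congrArg st (hdual α β)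
      rw [hanti, hanti, hanti, hinv, hse, apply_ite st, map_zero, hse] at h
      rw [← h]
    -- linear independence of the products
    have hliy : LinearIndependent k (fun p : A × A => x p.1 * e * st (x p.2)) := by
      rw [Fintype.linearIndependent_iff]
      intro g hg
      rintro ⟨γ, δ⟩
      have hterm : ∀ p : A × A, e * st (x' γ) * (g p • (x p.1 * e * st (x p.2))) *
          (x' δ * e) = if p = (γ, δ) then g p • e else 0 := by
        rintro ⟨α, β⟩
        rw [mul_smul_comm, smul_mul_assoc]
        have h1 : e * st (x' γ) * (x α * e * st (x β)) * (x' δ * e)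
            = (e * st (x' γ) * (x α * e)) * (st (x β) * (x' δ * e)) := by
          simp only [mul_assoc]
        rw [h1, hdual]
        by_cases hαγ : α = γ
        · rw [if_pos hαγ, show e * (st (x β) * (x' δ * e)) = e * st (x β) * (x' δ * e)
            from (mul_assoc _ _ _).symm, hdual2]
          by_cases hβδ : β = δ
          · simp [hαγ, hβδ]
          · simp [hβδ, Prod.ext_iff]
        · simp [hαγ, Prod.ext_iff]
      have key : e * st (x' γ) * (∑ p : A × A, g p • (x p.1 * e * st (x p.2))) *
          (x' δ * e) = g (γ, δ) • e := by
        rw [Finset.mul_sum, Finset.sum_mul]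
        rw [Finset.sum_congr rfl fun p _ => hterm p]
        rw [Finset.sum_ite_eq' Finset.univ (γ, δ) (fun p => g p • e)]
        simp
      rw [hg] at key
      simp only [mul_zero, zero_mul] at key
      rcases smul_eq_zero.mp key.symm with h | h
      · exact h
      · exact absurd h he0
    refine ⟨?_, hrange, hliy⟩
    -- injectivity via bases
    have hMspan : LinearMap.range (LinearMap.mulRight k e) =
        Submodule.span k (Set.range fun α : A => x α * e) := by
      apply le_antisymm
      · rintro z ⟨s, rfl⟩
        simpa using hspan s
      · rw [Submodule.span_le]
        rintro z ⟨α, rfl⟩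
        exact ⟨x α, rfl⟩
    have hstinj : Function.Injective st :=
      Function.LeftInverse.injective hinv
    have hli' : LinearIndependent k (fun α : A => e * st (x α)) := by
      have := hli.map' st (LinearMap.ker_eq_bot.mpr hstinj)
      convert this using 1
      funext α
      show e * st (x α) = st (x α * e)
      rw [hanti, hse]
      all_goals rfl
    have hspan' : ∀ s : S, e * s ∈
        Submodule.span k (Set.range fun α : A => e * st (x α)) := by
      intro s
      have h1 : e * s = st (st s * e) := by rw [hanti, hse, hinv]
      have h2 : st (st s * e) ∈ Submodule.map st
          (Submodule.span k (Set.range fun α : A => x α * e)) :=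
        Submodule.mem_map_of_mem (hspan (st s))
      rw [Submodule.map_span] at h2
      have hset : (⇑st '' Set.range fun α : A => x α * e) =
          Set.range fun α : A => e * st (x α) := by
        rw [← Set.range_comp]
        exact congrArg Set.range (funext fun α => by
          show st (x α * e) = e * st (x α)
          rw [hanti, hse])
      rw [hset] at h2
      rw [h1]
      exact h2
    have hNspan : LinearMap.range (LinearMap.mulLeft k e) =
        Submodule.span k (Set.range fun α : A => e * st (x α)) := by
      apply le_antisymm
      · rintro z ⟨s, rfl⟩
        simpa using hspan' s
      · rw [Submodule.span_le]
        rintro z ⟨α, rfl⟩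
        exact ⟨st (x α), rfl⟩
    let bM : Module.Basis A k (LinearMap.range (LinearMap.mulRight k e)) :=
      (Module.Basis.span hli).map (LinearEquiv.ofEq _ _ hMspan.symm)
    let bN : Module.Basis A k (LinearMap.range (LinearMap.mulLeft k e)) :=
      (Module.Basis.span hli').map (LinearEquiv.ofEq _ _ hNspan.symm)
    have hbM : ∀ α, (bM α : S) = x α * e := fun α => by
      simp [bM, Module.Basis.span_apply]
    have hbN : ∀ α, (bN α : S) = e * st (x α) := fun α => by
      simp [bN, Module.Basis.span_apply]
    let B := bM.tensorProduct bN
    have hB : ∀ p : A × A, multMap k S e (B p) = x p.1 * e * st (x p.2) := by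
      rintro ⟨α, β⟩
      rw [show B (α, β) = bM α ⊗ₜ bN β from Module.Basis.tensorProduct_apply bM bN α β,
        multMap_tmul, hbM, hbN, mul_assoc, ← mul_assoc e e, he, ← mul_assoc]
    suffices H : ∀ t, multMap k S e t = 0 → t = 0 by
      intro t1 t2 h12
      have := H (t1 + (-1 : k) • t2) (by rw [map_add, map_smul, h12, neg_one_smul, add_neg_cancel])
      calc t1 = t1 + ((-1 : k) + 1) • t2 := by rw [neg_add_cancel, zero_smul, add_zero]
        _ = (t1 + (-1 : k) • t2) + t2 := by rw [add_smul, one_smul, add_assoc]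
        _ = t2 := by rw [this, zero_add]
    intro t ht
    have hrep := B.sum_repr t
    have h0 : ∑ p : A × A, B.repr t p • (x p.1 * e * st (x p.2)) = 0 := by
      calc ∑ p : A × A, B.repr t p • (x p.1 * e * st (x p.2))
          = multMap k S e (∑ p : A × A, B.repr t p • B p) := by
            rw [map_sum]
            exact Finset.sum_congr rfl fun p _ => by rw [map_smul, hB]
        _ = 0 := by rw [hrep]; exact ht
    have hrep0 : ∀ p : A × A, B.repr t p = 0 :=
      Fintype.linearIndependent_iff.mp hliy _ h0
    have : t = 0 := by
      rw [← hrep]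
      simp [hrep0]
    simp [this]
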